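/- Let S be a nonempty finite index set, for each s ∈ S let E(s) be a finite-dimensional real inner product space, let V = ∏_{s∈S} E(s), and fix p ∈ [2,∞). Define g_p(U) := (1/2)‖U‖_{2,p}². Then g_p is convex on V, g_p is Fréchet differentiable on V, and for all U, U' ∈ V one has g_p(U') ≤ g_p(U) + Dg_p(U)[U' − U] + ((p − 1)/2) · ‖U' − U‖_{2,p}², where Dg_p(U) denotes the Fréchet derivative of g_p at U. -/

import Mathlib

open Filter Asymptotics

/-- Derivative of `u ↦ (u²)^((p-2)/2) · u`, valid for all `u` when `p ≥ 2`. -/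
lemma aux_phi_hasDerivAt (p : ℝ) (hp : 2 ≤ p) (u : ℝ) :
    HasDerivAt (fun u : ℝ => ((u ^ 2) ^ ((p - 2) / 2)) * u)
      ((p - 1) * (u ^ 2) ^ ((p - 2) / 2)) u := by
  rcases eq_or_ne u 0 with rfl | hu
  · rcases eq_or_lt_of_le hp with hp2 | hp2
    · -- p = 2
      have hfun : (fun u : ℝ => ((u ^ 2) ^ ((p - 2) / 2)) * u) = fun u : ℝ => u := by
        funext v
        rw [← hp2]
        norm_num
      rw [hfun, ← hp2]
      norm_num
      exact hasDerivAt_id 0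
    · -- p > 2
      have hval : (p - 1) * ((0:ℝ) ^ 2) ^ ((p - 2) / 2) = 0 := by
        rw [show ((0:ℝ) ^ 2) = 0 by norm_num, Real.zero_rpow (ne_of_gt (by linarith : (0:ℝ) < (p - 2) / 2))]
        ring
      rw [hval]
      have habs : ∀ v : ℝ, ((v ^ 2 : ℝ)) ^ ((p - 2) / 2) = |v| ^ (p - 2) := by
        intro v
        rw [← sq_abs, ← Real.rpow_natCast |v| 2, ← Real.rpow_mul (abs_nonneg v),
          show ((2:ℕ):ℝ) * ((p - 2) / 2) = p - 2 by push_cast; ring]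
      rw [hasDerivAt_iff_tendsto_slope]
      have h1 : Tendsto (fun v : ℝ => |v| ^ (p - 2)) (nhds 0) (nhds 0) := by
        have hc : ContinuousAt (fun x : ℝ => x ^ (p - 2)) 0 :=
          Real.continuousAt_rpow_const 0 (p - 2) (Or.inr (by linarith))
        have := hc.tendsto.comp (continuous_abs.tendsto' 0 0 abs_zero)
        simpa [Function.comp_def,
          Real.zero_rpow (ne_of_gt (by linarith : (0:ℝ) < p - 2))] using this
      have h2 : Tendsto (fun v : ℝ => ((v ^ 2 : ℝ)) ^ ((p - 2) / 2)) (nhdsWithin 0 {(0:ℝ)}ᶜ) (nhds 0) := by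
        refine Tendsto.mono_left ?_ nhdsWithin_le_nhds
        simpa [habs] using h1
      refine h2.congr' ?_
      filter_upwards [self_mem_nhdsWithin] with v hv
      have hv' : v ≠ 0 := hv
      rw [slope_def_field]
      field_simp
      ring
  · -- u ≠ 0
    have h2 : (0:ℝ) < u ^ 2 := by positivity
    have hr : HasDerivAt (fun u : ℝ => (u ^ 2 : ℝ)) (2 * u) u := by
      simpa using (hasDerivAt_pow 2 u)
    have hcomp := hr.rpow_const (p := (p - 2) / 2) (Or.inl (ne_of_gt h2))
    have hmul := hcomp.mul (hasDerivAt_id u)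
    have e1 : ((u ^ 2 : ℝ)) ^ ((p - 2) / 2 - 1) * (u ^ 2) = (u ^ 2) ^ ((p - 2) / 2) := by
      nth_rewrite 2 [show ((p - 2) / 2 : ℝ) = ((p - 2) / 2 - 1) + 1 by ring]
      rw [Real.rpow_add h2, Real.rpow_one]
    convert hmul using 1
    · rfl
    · rfl
    · rfl
    simp only [id_eq, mul_one]
    linear_combination (2 - p) * e1

section Block

variable {F : Type*} [NormedAddCommGroup F] [InnerProductSpace ℝ F]

local notation "⟪" x ", " y "⟫" => @inner ℝ _ _ x y

/-- The squared norm along a line, as an explicit polynomial. -/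
noncomputable def RRq (a w : F) (t : ℝ) : ℝ := ‖a‖ ^ 2 + (2 * ⟪a, w⟫) * t + ‖w‖ ^ 2 * t ^ 2

/-- Half the derivative of `RRq`. -/
noncomputable def QQq (a w : F) (t : ℝ) : ℝ := ⟪a, w⟫ + t * ‖w‖ ^ 2

lemma RRq_eq (a w : F) (t : ℝ) : RRq a w t = ‖a + t • w‖ ^ 2 := by
  rw [norm_add_sq_real, real_inner_smul_right, norm_smul, mul_pow, RRq]
  simp only [Real.norm_eq_abs, sq_abs]
  ring

lemma RRq_nonneg (a w : F) (t : ℝ) : 0 ≤ RRq a w t := by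
  rw [RRq_eq]; positivity

lemma RRq_pos (a w : F) (t : ℝ) (h : a + t • w ≠ 0) : 0 < RRq a w t := by
  rw [RRq_eq]
  have := norm_pos_iff.2 h
  positivity

lemma QQq_eq (a w : F) (t : ℝ) : QQq a w t = ⟪a + t • w, w⟫ := by
  rw [inner_add_left, real_inner_smul_left, QQq, real_inner_self_eq_norm_sq]

lemma QQq_sq_le (a w : F) (t : ℝ) : QQq a w t ^ 2 ≤ RRq a w t * ‖w‖ ^ 2 := by
  rw [QQq_eq, RRq_eq]
  have h := real_inner_mul_inner_self_le (a + t • w) w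
  rw [real_inner_self_eq_norm_sq, real_inner_self_eq_norm_sq] at h
  nlinarith [h]

lemma hasDerivAt_RRq (a w : F) (t : ℝ) : HasDerivAt (RRq a w) (2 * QQq a w t) t := by
  have h : HasDerivAt (fun t : ℝ => ‖a‖ ^ 2 + (2 * ⟪a, w⟫) * t + ‖w‖ ^ 2 * t ^ 2)
      (0 + 2 * ⟪a, w⟫ * 1 + ‖w‖ ^ 2 * (2 * t)) t := by
    refine ((hasDerivAt_const t _).add ((hasDerivAt_id t).const_mul _)).add ?_
    simpa using ((hasDerivAt_pow 2 t).const_mul (‖w‖ ^ 2))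
  have : (0 + 2 * ⟪a, w⟫ * 1 + ‖w‖ ^ 2 * (2 * t)) = 2 * QQq a w t := by
    rw [QQq]; ring
  rw [← this]
  exact h

lemma blk_d1 (p : ℝ) (hp : 2 ≤ p) (a w : F) (t : ℝ) :
    HasDerivAt (fun t => (RRq a w t) ^ (p / 2))
      (p * (RRq a w t) ^ ((p - 2) / 2) * QQq a w t) t := by
  have h := (hasDerivAt_RRq a w t).rpow_const (p := p / 2) (Or.inr (by linarith))
  convert h using 1
  rw [show (p / 2 - 1 : ℝ) = (p - 2) / 2 by ring]
  ring

lemma blk_d2 (p : ℝ) (hp : 2 ≤ p) (a w : F) (t : ℝ) :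
    ∃ d, HasDerivAt (fun t => p * (RRq a w t) ^ ((p - 2) / 2) * QQq a w t) d t ∧
      d ≤ p * (p - 1) * (RRq a w t) ^ ((p - 2) / 2) * ‖w‖ ^ 2 := by
  by_cases hw : w = 0
  · refine ⟨0, ?_, ?_⟩
    · have hfun : (fun t : ℝ => p * (RRq a w t) ^ ((p - 2) / 2) * QQq a w t)
          = fun _ => (0:ℝ) := by
        funext v
        simp [QQq, hw]
      rw [hfun]
      exact hasDerivAt_const _ _
    · simp [hw]
  · by_cases hz : a + t • w = 0
    · -- the block vanishes at `t`; the function has an explicit global form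
      have ha : a = (-t) • w := by
        rw [neg_smul]
        exact eq_neg_of_add_eq_zero_left hz
      have hw2 : (0:ℝ) < ‖w‖ ^ 2 := by
        have := norm_pos_iff.2 hw
        positivity
      have hRR : ∀ u : ℝ, RRq a w u = ‖w‖ ^ 2 * (u - t) ^ 2 := by
        intro u
        rw [RRq, ha, real_inner_smul_left, real_inner_self_eq_norm_sq, norm_smul, mul_pow]
        simp [Real.norm_eq_abs, sq_abs]
        ring
      have hQQ : ∀ u : ℝ, QQq a w u = ‖w‖ ^ 2 * (u - t) := by
        intro u
        rw [QQq, ha, real_inner_smul_left, real_inner_self_eq_norm_sq]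
        ring
      set C : ℝ := p * (‖w‖ ^ 2) ^ ((p - 2) / 2) * ‖w‖ ^ 2 with hC
      have hfun : (fun u : ℝ => p * (RRq a w u) ^ ((p - 2) / 2) * QQq a w u)
          = fun u : ℝ => C * (((u - t) ^ 2) ^ ((p - 2) / 2) * (u - t)) := by
        funext u
        rw [hRR u, hQQ u, Real.mul_rpow (by positivity) (by positivity), hC]
        ring
      refine ⟨C * ((p - 1) * ((t - t) ^ 2) ^ ((p - 2) / 2)), ?_, ?_⟩
      · rw [hfun]
        have hsub : HasDerivAt (fun u : ℝ => u - t) 1 t := (hasDerivAt_id t).sub_const t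
        have hphi : HasDerivAt (fun u : ℝ => (((u - t) ^ 2) ^ ((p - 2) / 2)) * (u - t))
            ((p - 1) * ((t - t) ^ 2) ^ ((p - 2) / 2) * 1) t :=
          HasDerivAt.comp (h₂ := fun v : ℝ => ((v ^ 2) ^ ((p - 2) / 2)) * v)
            (h := fun u : ℝ => u - t) t (aux_phi_hasDerivAt p hp (t - t)) hsub
        simpa [mul_comm] using hphi.const_mul C
      · rw [hRR t, Real.mul_rpow (by positivity) (by positivity), hC]
        ring_nf
        exact le_refl _
    · -- the block is nonvanishing at `t`: ordinary product/chain rule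
      have hR : 0 < RRq a w t := RRq_pos a w t hz
      have hA := ((hasDerivAt_RRq a w t).rpow_const
        (p := (p - 2) / 2) (Or.inl (ne_of_gt hR))).const_mul p
      have hQ : HasDerivAt (QQq a w) (‖w‖ ^ 2) t := by
        have h : HasDerivAt (fun u : ℝ => ⟪a, w⟫ + u * ‖w‖ ^ 2) (‖w‖ ^ 2) t := by
          simpa using ((hasDerivAt_id t).mul_const (‖w‖ ^ 2)).const_add ⟪a, w⟫
        exact h
      have hprod := hA.mul hQ
      refine ⟨_, hprod, ?_⟩
      -- bound the derivative value
      have e1 : (RRq a w t) ^ ((p - 2) / 2 - 1) * RRq a w t = (RRq a w t) ^ ((p - 2) / 2) := by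
        nth_rewrite 2 [show ((p - 2) / 2 : ℝ) = ((p - 2) / 2 - 1) + 1 by ring]
        rw [Real.rpow_add hR, Real.rpow_one]
      have hQsq := QQq_sq_le a w t
      have hXnn : (0:ℝ) ≤ (RRq a w t) ^ ((p - 2) / 2 - 1) := Real.rpow_nonneg hR.le _
      have hp2 : (0:ℝ) ≤ p - 2 := by linarith
      nlinarith [mul_le_mul_of_nonneg_left hQsq
          (by positivity : (0:ℝ) ≤ p * (p - 2) * (RRq a w t) ^ ((p - 2) / 2 - 1)),
        e1, mul_le_mul_of_nonneg_left e1.le (by positivity : (0:ℝ) ≤ p * (p - 2) * ‖w‖ ^ 2)]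

end Block

section Vlevel

open Finset

variable {S : Type*} [Fintype S] {E : S → Type*} [∀ s, NormedAddCommGroup (E s)]
  [∀ s, InnerProductSpace ℝ (E s)]

lemma aux_sq_rpow {p : ℝ} (hp0 : 0 < p) {x : ℝ} (hx : 0 ≤ x) :
    ((x ^ (1 / p)) ^ (2:ℕ) : ℝ) = x ^ (2 / p) := by
  rw [← Real.rpow_natCast (x ^ (1 / p)) 2, ← Real.rpow_mul hx,
    show (1 / p) * ((2:ℕ):ℝ) = 2 / p by push_cast; ring]

lemma aux_pow_two_rpow {p : ℝ} (hp0 : 0 < p) {c : ℝ} (hc : 0 ≤ c) :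
    ((c ^ (2:ℕ) : ℝ)) ^ (p / 2) = c ^ p := by
  rw [← Real.rpow_natCast c 2, ← Real.rpow_mul hc,
    show ((2:ℕ):ℝ) * (p / 2) = p by push_cast; ring]

lemma aux_Phi_nonneg (p : ℝ) (U : ∀ s, E s) : 0 ≤ ∑ s, ‖U s‖ ^ p :=
  Finset.sum_nonneg fun s _ => Real.rpow_nonneg (norm_nonneg _) _

lemma aux_Phi_pos {p : ℝ} (hp0 : 0 < p) {U : ∀ s, E s} (h : U ≠ 0) :
    0 < ∑ s, ‖U s‖ ^ p := by
  obtain ⟨s₀, hs₀⟩ := Function.ne_iff.1 h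
  refine Finset.sum_pos' (fun s _ => Real.rpow_nonneg (norm_nonneg _) _) ⟨s₀, Finset.mem_univ _, ?_⟩
  exact Real.rpow_pos_of_pos (norm_pos_iff.2 hs₀) _

end Vlevel

section Vdiff

open Finset Filter Asymptotics

variable {S : Type*} [Fintype S] {E : S → Type*} [∀ s, NormedAddCommGroup (E s)]
  [∀ s, InnerProductSpace ℝ (E s)]

lemma aux_P_diff (p : ℝ) (hp : 2 ≤ p) :
    Differentiable ℝ (fun U : ∀ s, E s => ∑ s, ‖U s‖ ^ p) := by
  have h1p : (1:ℝ) ≤ p / 2 := by linarith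
  apply Differentiable.fun_sum
  intro s _
  have h2 : (fun U : ∀ s, E s => ‖U s‖ ^ p)
      = (fun x : ℝ => x ^ (p / 2)) ∘ (fun y : E s => ‖y‖ ^ 2) ∘ (fun U : ∀ s, E s => U s) := by
    funext U
    simp only [Function.comp_apply]
    rw [aux_pow_two_rpow (by linarith : (0:ℝ) < p) (norm_nonneg _)]
  rw [h2]
  exact (Real.differentiable_rpow_const h1p).comp
    (((contDiff_norm_sq ℝ (n := 1)).differentiable one_ne_zero).comp
      ((ContinuousLinearMap.proj (R := ℝ) (φ := E) s).differentiable))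

lemma aux_G_diff (p : ℝ) (hp : 2 ≤ p) :
    Differentiable ℝ (fun U : ∀ s, E s => (1/2) * ((∑ s, ‖U s‖ ^ p) ^ (2 / p))) := by
  have hp0 : (0:ℝ) < p := by linarith
  intro U
  by_cases hU : U = 0
  · -- little-o argument at the origin
    subst hU
    have hbound : ∀ V : ∀ s, E s,
        (1/2) * ((∑ s, ‖V s‖ ^ p) ^ (2 / p)) ≤
          (1/2) * (Fintype.card S : ℝ) ^ (2 / p) * (‖V‖ * ‖V‖) := by
      intro V
      have h1 : (∑ s, ‖V s‖ ^ p) ≤ (Fintype.card S : ℝ) * ‖V‖ ^ p := by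
        calc (∑ s, ‖V s‖ ^ p) ≤ ∑ _s : S, ‖V‖ ^ p := by
              refine Finset.sum_le_sum fun s _ => ?_
              exact Real.rpow_le_rpow (norm_nonneg _) (norm_le_pi_norm V s) hp0.le
          _ = (Fintype.card S : ℝ) * ‖V‖ ^ p := by
              rw [Finset.sum_const, nsmul_eq_mul]; rfl
      have h2 : ((∑ s, ‖V s‖ ^ p) ^ (2 / p))
          ≤ (Fintype.card S : ℝ) ^ (2 / p) * (‖V‖ * ‖V‖) := by
        calc ((∑ s, ‖V s‖ ^ p) ^ (2 / p))
            ≤ ((Fintype.card S : ℝ) * ‖V‖ ^ p) ^ (2 / p) :=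
              Real.rpow_le_rpow (aux_Phi_nonneg p V) h1 (by positivity)
          _ = (Fintype.card S : ℝ) ^ (2 / p) * (‖V‖ * ‖V‖) := by
              rw [Real.mul_rpow (by positivity) (Real.rpow_nonneg (norm_nonneg _) _),
                ← Real.rpow_mul (norm_nonneg _), show p * (2 / p) = 2 by field_simp,
                show ((2:ℝ) : ℝ) = ((2:ℕ):ℝ) by norm_num, Real.rpow_natCast]
              ring
      linarith
    have hzero : (1/2) * ((∑ s, ‖(0 : ∀ s, E s) s‖ ^ p) ^ (2 / p)) = 0 := by
      have : (∑ s, ‖(0 : ∀ s, E s) s‖ ^ p) = 0 := by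
        refine Finset.sum_eq_zero fun s _ => ?_
        simp [Real.zero_rpow (ne_of_gt hp0)]
      rw [this, Real.zero_rpow (by positivity), mul_zero]
    have hderiv : HasFDerivAt (fun U : ∀ s, E s => (1/2) * ((∑ s, ‖U s‖ ^ p) ^ (2 / p)))
        (0 : (∀ s, E s) →L[ℝ] ℝ) 0 := by
      rw [hasFDerivAt_iff_isLittleO_nhds_zero]
      rw [isLittleO_iff]
      intro c hc
      have hC : (0:ℝ) < (1/2) * (Fintype.card S : ℝ) ^ (2 / p) + 1 := by positivity
      rw [Metric.eventually_nhds_iff]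
      refine ⟨c / ((1/2) * (Fintype.card S : ℝ) ^ (2 / p) + 1), by positivity, fun {V} hV => ?_⟩
      have hVn : ‖V‖ < c / ((1/2) * (Fintype.card S : ℝ) ^ (2 / p) + 1) := by
        simpa [dist_zero_right] using hV
      have hGnn : 0 ≤ (1/2) * ((∑ s, ‖(0 + V : ∀ s, E s) s‖ ^ p) ^ (2 / p)) := by
        have := aux_Phi_nonneg p (0 + V : ∀ s, E s)
        positivity
      simp only [zero_add, hzero, ContinuousLinearMap.zero_apply, sub_zero]
      rw [Real.norm_eq_abs, abs_of_nonneg (by simpa using hGnn)]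
      calc (1/2) * ((∑ s, ‖V s‖ ^ p) ^ (2 / p))
          ≤ (1/2) * (Fintype.card S : ℝ) ^ (2 / p) * (‖V‖ * ‖V‖) := hbound V
        _ ≤ (((1/2) * (Fintype.card S : ℝ) ^ (2 / p) + 1) * ‖V‖) * ‖V‖ := by
            nlinarith [norm_nonneg V]
        _ ≤ c * ‖V‖ := by
            have h3 : ((1/2) * (Fintype.card S : ℝ) ^ (2 / p) + 1) * ‖V‖ ≤ c := by
              rw [← le_div_iff₀' hC]
              exact hVn.le
            exact mul_le_mul_of_nonneg_right h3 (norm_nonneg V)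
    exact hderiv.differentiableAt
  · have hP : 0 < ∑ s, ‖U s‖ ^ p := aux_Phi_pos hp0 hU
    exact ((aux_P_diff p hp U).rpow_const (Or.inl hP.ne')).const_mul _

end Vdiff

section Vconv

open Finset

variable {S : Type*} [Fintype S] {E : S → Type*} [∀ s, NormedAddCommGroup (E s)]
  [∀ s, InnerProductSpace ℝ (E s)]

lemma aux_scal_pull {p : ℝ} (hp0 : 0 < p) (θ : ℝ) (hθ : 0 ≤ θ) (a : S → ℝ)
    (ha : ∀ s, 0 ≤ a s) :
    (∑ s, (θ * a s) ^ p) ^ (1 / p) = θ * (∑ s, (a s) ^ p) ^ (1 / p) := by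
  have h1 : ∀ s, (θ * a s) ^ p = θ ^ p * (a s) ^ p := fun s =>
    Real.mul_rpow hθ (ha s)
  rw [Finset.sum_congr rfl fun s _ => h1 s, ← Finset.mul_sum,
    Real.mul_rpow (Real.rpow_nonneg hθ _) (Finset.sum_nonneg fun s _ =>
      Real.rpow_nonneg (ha s) _),
    ← Real.rpow_mul hθ, mul_one_div, div_self (ne_of_gt hp0), Real.rpow_one]

lemma aux_G_convex (p : ℝ) (hp : 2 ≤ p) :
    ConvexOn ℝ Set.univ (fun U : ∀ s, E s => (1/2) * ((∑ s, ‖U s‖ ^ p) ^ (2 / p))) := by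
  have hp0 : (0:ℝ) < p := by linarith
  refine ⟨convex_univ, fun U _ U' _ θ σ hθ hσ hsum => ?_⟩
  simp only [smul_eq_mul]
  set NU : ℝ := (∑ s, ‖U s‖ ^ p) ^ (1 / p) with hNU
  set NU' : ℝ := (∑ s, ‖U' s‖ ^ p) ^ (1 / p) with hNU'
  have hNUnn : 0 ≤ NU := Real.rpow_nonneg (aux_Phi_nonneg p U) _
  have hNU'nn : 0 ≤ NU' := Real.rpow_nonneg (aux_Phi_nonneg p U') _
  -- step 1 : triangle inequality for the (2,p) norm
  have step1 : (∑ s, ‖(θ • U + σ • U') s‖ ^ p) ^ (1 / p) ≤ θ * NU + σ * NU' := by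
    have h1a : (∑ s, ‖(θ • U + σ • U') s‖ ^ p)
        ≤ ∑ s, |θ * ‖U s‖ + σ * ‖U' s‖| ^ p := by
      refine Finset.sum_le_sum fun s _ => ?_
      refine Real.rpow_le_rpow (norm_nonneg _) ?_ hp0.le
      have : ‖(θ • U + σ • U') s‖ ≤ θ * ‖U s‖ + σ * ‖U' s‖ := by
        refine le_trans (norm_add_le _ _) ?_
        show ‖θ • U s‖ + ‖σ • U' s‖ ≤ _
        rw [norm_smul, norm_smul, Real.norm_eq_abs, Real.norm_eq_abs,
          abs_of_nonneg hθ, abs_of_nonneg hσ]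
      refine le_trans this (le_abs_self _)
    have h1b := Real.Lp_add_le (s := Finset.univ) (fun s => θ * ‖U s‖)
      (fun s => σ * ‖U' s‖) (by linarith : (1:ℝ) ≤ p)
    have h1c : (∑ s, |θ * ‖U s‖| ^ p) ^ (1 / p) = θ * NU := by
      rw [hNU]
      have : ∀ s : S, |θ * ‖U s‖| = θ * ‖U s‖ := fun s => abs_of_nonneg (by positivity)
      rw [Finset.sum_congr rfl fun s _ => by rw [this s]]
      exact aux_scal_pull hp0 θ hθ _ (fun s => norm_nonneg _)
    have h1d : (∑ s, |σ * ‖U' s‖| ^ p) ^ (1 / p) = σ * NU' := by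
      rw [hNU']
      have : ∀ s : S, |σ * ‖U' s‖| = σ * ‖U' s‖ := fun s => abs_of_nonneg (by positivity)
      rw [Finset.sum_congr rfl fun s _ => by rw [this s]]
      exact aux_scal_pull hp0 σ hσ _ (fun s => norm_nonneg _)
    calc (∑ s, ‖(θ • U + σ • U') s‖ ^ p) ^ (1 / p)
        ≤ (∑ s, |θ * ‖U s‖ + σ * ‖U' s‖| ^ p) ^ (1 / p) :=
          Real.rpow_le_rpow (aux_Phi_nonneg p _) h1a (by positivity)
      _ ≤ (∑ s, |θ * ‖U s‖| ^ p) ^ (1 / p) + (∑ s, |σ * ‖U' s‖| ^ p) ^ (1 / p) := h1b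
      _ = θ * NU + σ * NU' := by rw [h1c, h1d]
  -- step 2 : convexity of the square
  have hM : ((∑ s, ‖(θ • U + σ • U') s‖ ^ p) ^ (2 / p))
      = (((∑ s, ‖(θ • U + σ • U') s‖ ^ p) ^ (1 / p)) ^ (2:ℕ)) := by
    rw [aux_sq_rpow hp0 (aux_Phi_nonneg p _)]
  have hU2 : ((∑ s, ‖U s‖ ^ p) ^ (2 / p)) = NU ^ (2:ℕ) := by
    rw [hNU, aux_sq_rpow hp0 (aux_Phi_nonneg p _)]
  have hU'2 : ((∑ s, ‖U' s‖ ^ p) ^ (2 / p)) = NU' ^ (2:ℕ) := by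
    rw [hNU', aux_sq_rpow hp0 (aux_Phi_nonneg p _)]
  rw [hM, hU2, hU'2]
  have hMnn : 0 ≤ (∑ s, ‖(θ • U + σ • U') s‖ ^ p) ^ (1 / p) :=
    Real.rpow_nonneg (aux_Phi_nonneg p _) _
  have hsq : ((∑ s, ‖(θ • U + σ • U') s‖ ^ p) ^ (1 / p)) ^ (2:ℕ)
      ≤ (θ * NU + σ * NU') ^ (2:ℕ) := by
    exact pow_le_pow_left₀ hMnn step1 2
  nlinarith [sq_nonneg (NU - NU'), mul_nonneg hθ hσ, hsq]

end Vconv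

section Vmain

open Finset Set

variable {S : Type*} [Fintype S] {E : S → Type*} [∀ s, NormedAddCommGroup (E s)]
  [∀ s, InnerProductSpace ℝ (E s)]

lemma aux_main (p : ℝ) (hp : 2 ≤ p) (U W : ∀ s, E s)
    (hdiff : Differentiable ℝ (fun V : ∀ s, E s => (1/2) * ((∑ s, ‖V s‖ ^ p) ^ (2 / p)))) :
    (1/2) * ((∑ s, ‖(U + W) s‖ ^ p) ^ (2 / p)) ≤
      (1/2) * ((∑ s, ‖U s‖ ^ p) ^ (2 / p))
      + fderiv ℝ (fun V : ∀ s, E s => (1/2) * ((∑ s, ‖V s‖ ^ p) ^ (2 / p))) U W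
      + ((p - 1) / 2) * ((∑ s, ‖W s‖ ^ p) ^ (2 / p)) := by
  have hp0 : (0:ℝ) < p := by linarith
  set G : (∀ s, E s) → ℝ := fun V => (1/2) * ((∑ s, ‖V s‖ ^ p) ^ (2 / p)) with hG
  set cp : ℝ := (∑ s, ‖W s‖ ^ p) ^ (2 / p) with hcp
  have hcpnn : 0 ≤ cp := Real.rpow_nonneg (aux_Phi_nonneg p W) _
  -- derivative of G along the line t ↦ U + t • W at t = 0
  have hline : ∀ t : ℝ, HasDerivAt (fun t : ℝ => U + t • W) W t := by
    intro t
    simpa using ((hasDerivAt_id t).smul_const W).const_add U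
  have hGd0 : HasDerivAt (fun t : ℝ => G (U + t • W)) (fderiv ℝ G U W) 0 := by
    have hF : HasFDerivAt G (fderiv ℝ G U) (U + (0:ℝ) • W) := by
      rw [show U + (0:ℝ) • W = U by simp]
      exact (hdiff U).hasFDerivAt
    exact hF.comp_hasDerivAt 0 (hline 0)
  by_cases hB : ∃ t0 : ℝ, U + t0 • W = 0
  · -- degenerate case : the line passes through the origin
    obtain ⟨t0, ht0⟩ := hB
    have hUW : ∀ t : ℝ, U + t • W = (t - t0) • W := by
      intro t
      have hU : U = -(t0 • W) := eq_neg_of_add_eq_zero_left ht0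
      rw [hU, sub_smul]
      abel
    have hGline : ∀ t : ℝ, G (U + t • W) = (cp/2) * (t - t0)^2 := by
      intro t
      rw [hUW t, hG]
      simp only []
      have hterm : ∀ s : S, ‖((t - t0) • W) s‖ ^ p = |t - t0| ^ p * ‖W s‖ ^ p := by
        intro s
        show ‖(t - t0) • W s‖ ^ p = _
        rw [norm_smul, Real.norm_eq_abs, Real.mul_rpow (abs_nonneg _) (norm_nonneg _)]
      rw [Finset.sum_congr rfl fun s _ => hterm s, ← Finset.mul_sum,
        Real.mul_rpow (Real.rpow_nonneg (abs_nonneg _) _) (aux_Phi_nonneg p W),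
        ← Real.rpow_mul (abs_nonneg _), show p * (2/p) = 2 by field_simp,
        show ((2:ℝ)) = ((2:ℕ):ℝ) by norm_num, Real.rpow_natCast, sq_abs, hcp]
      ring
    have hq : HasDerivAt (fun t : ℝ => (cp/2) * (t - t0)^2) (cp * (0 - t0)) 0 := by
      have h := (((hasDerivAt_id (0:ℝ)).sub_const t0).pow 2).const_mul (cp/2)
      convert h using 1
      · rfl
      · rfl
      · rfl
      simp
      ring
    have hfd : fderiv ℝ G U W = cp * (0 - t0) := by
      have h1 : (fun t : ℝ => G (U + t • W)) = fun t => (cp/2) * (t - t0)^2 :=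
        funext hGline
      exact HasDerivAt.unique (h1 ▸ hGd0) hq
    have e1 : G (U + W) = (cp/2) * (1 - t0)^2 := by
      rw [show U + W = U + (1:ℝ) • W by simp, hGline 1]
    have e0 : G U = (cp/2) * (0 - t0)^2 := by
      rw [show G U = G (U + (0:ℝ) • W) by simp, hGline 0]
    show G (U + W) ≤ G U + (fderiv ℝ G U) W + (p - 1) / 2 * cp
    rw [e1, e0, hfd]
    nlinarith [hcpnn, hp]
  · -- main case : the line avoids the origin
    push_neg at hB
    set Φ : ℝ → ℝ := fun t => ∑ s, (RRq (U s) (W s) t) ^ (p/2) with hΦdef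
    set Φ₁ : ℝ → ℝ := fun t =>
      ∑ s, p * (RRq (U s) (W s) t) ^ ((p-2)/2) * QQq (U s) (W s) t with hΦ₁def
    have hΦeq : ∀ t : ℝ, Φ t = ∑ s, ‖(U + t • W) s‖ ^ p := by
      intro t
      refine Finset.sum_congr rfl fun s _ => ?_
      rw [RRq_eq]
      exact aux_pow_two_rpow hp0 (norm_nonneg _)
    have hΦpos : ∀ t : ℝ, 0 < Φ t := by
      intro t
      rw [hΦeq t]
      exact aux_Phi_pos hp0 (hB t)
    have hΦd : ∀ t : ℝ, HasDerivAt Φ (Φ₁ t) t := fun t =>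
      HasDerivAt.fun_sum fun s _ => blk_d1 p hp (U s) (W s) t
    choose Dn hd hb using fun (s : S) (t : ℝ) => blk_d2 p hp (U s) (W s) t
    have hΦ₁d : ∀ t : ℝ, HasDerivAt Φ₁ (∑ s, Dn s t) t := fun t =>
      HasDerivAt.fun_sum fun s _ => hd s t
    -- Hölder step
    have hHold : ∀ t : ℝ, ∑ s, (RRq (U s) (W s) t) ^ ((p-2)/2) * ‖W s‖ ^ 2
        ≤ (Φ t) ^ ((p-2)/p) * cp := by
      intro t
      have hwp : ∀ s : S, (‖W s‖ ^ (2:ℕ) : ℝ) ^ (p/2) = ‖W s‖ ^ p := fun s =>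
        aux_pow_two_rpow hp0 (norm_nonneg _)
      rcases eq_or_lt_of_le hp with hp2 | hp2
      · -- p = 2
        have h22 : ((p - 2) / 2 : ℝ) = 0 := by rw [← hp2]; norm_num
        have h2p : ((p - 2) / p : ℝ) = 0 := by rw [← hp2]; norm_num
        have hcp2 : cp = ∑ s, (‖W s‖:ℝ) ^ (2:ℕ) := by
          rw [hcp, show (2/p : ℝ) = 1 by rw [← hp2]; norm_num, Real.rpow_one]
          refine Finset.sum_congr rfl fun s _ => ?_
          rw [← hwp s, ← hp2]
          norm_num
        rw [h22, h2p, Real.rpow_zero, one_mul, hcp2]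
        simp [Real.rpow_zero]
      · -- 2 < p
        have hp2' : (0:ℝ) < p - 2 := by linarith
        have hpq : ((p/(p-2)) : ℝ).HolderConjugate (p/2) := by
          constructor
          · rw [inv_div, inv_div, inv_one]
            rw [div_add_div _ _ (ne_of_gt hp0) (ne_of_gt hp0), div_eq_one_iff_eq (by positivity)]
            ring
          · positivity
          · positivity
        have hHolder := Real.inner_le_Lp_mul_Lq (s := Finset.univ)
          (fun s => (RRq (U s) (W s) t) ^ ((p-2)/2)) (fun s => (‖W s‖:ℝ) ^ (2:ℕ)) hpq
        have e1 : (∑ s, |(RRq (U s) (W s) t) ^ ((p-2)/2)| ^ (p/(p-2))) = Φ t := by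
          refine Finset.sum_congr rfl fun s _ => ?_
          rw [abs_of_nonneg (Real.rpow_nonneg (RRq_nonneg _ _ _) _),
            ← Real.rpow_mul (RRq_nonneg _ _ _),
            show ((p-2)/2) * (p/(p-2)) = p/2 by
              field_simp
              ]
        have e2 : (∑ s, (|(‖W s‖:ℝ) ^ (2:ℕ)|) ^ (p/2)) = ∑ s, ‖W s‖ ^ p := by
          refine Finset.sum_congr rfl fun s _ => ?_
          rw [abs_of_nonneg (by positivity), hwp s]
        rw [e1, e2, show (1/(p/(p-2)) : ℝ) = (p-2)/p by rw [one_div_div],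
          show (1/(p/2) : ℝ) = 2/p by rw [one_div_div], ← hcp] at hHolder
        exact hHolder
    -- derivative bound for Φ₁
    have hD_le : ∀ t : ℝ, ∑ s, Dn s t ≤ p * (p-1) * ((Φ t) ^ ((p-2)/p) * cp) := by
      intro t
      calc ∑ s, Dn s t
          ≤ ∑ s, p * (p-1) * (RRq (U s) (W s) t) ^ ((p-2)/2) * ‖W s‖ ^ 2 :=
            Finset.sum_le_sum fun s _ => hb s t
        _ = p * (p-1) * ∑ s, (RRq (U s) (W s) t) ^ ((p-2)/2) * ‖W s‖ ^ 2 := by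
            rw [Finset.mul_sum]
            exact Finset.sum_congr rfl fun s _ => by ring
        _ ≤ p * (p-1) * ((Φ t) ^ ((p-2)/p) * cp) := by
            refine mul_le_mul_of_nonneg_left (hHold t) ?_
            nlinarith
    -- the potential along the line and its first two derivatives
    set h : ℝ → ℝ := fun t => (1/2) * (Φ t) ^ (2/p) with hhdef
    set h₁ : ℝ → ℝ := fun t => (1/p) * (Φ t) ^ ((2-p)/p) * Φ₁ t with hh₁def
    have hhd : ∀ t : ℝ, HasDerivAt h (h₁ t) t := by
      intro t
      have h' := ((hΦd t).rpow_const (p := 2/p) (Or.inl (hΦpos t).ne')).const_mul (1/2)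
      convert h' using 1
      · rfl
      · rfl
      rw [show (2/p - 1 : ℝ) = (2-p)/p by field_simp]
      ring
    have hh1d : ∀ t : ℝ, ∃ d2, HasDerivAt h₁ d2 t ∧ d2 ≤ (p-1) * cp := by
      intro t
      have hA := ((hΦd t).rpow_const (p := (2-p)/p)
        (Or.inl (hΦpos t).ne')).const_mul (1/p)
      have hprod := hA.mul (hΦ₁d t)
      refine ⟨_, hprod, ?_⟩
      have hXnn : (0:ℝ) ≤ (Φ t) ^ ((2-p)/p - 1) := Real.rpow_nonneg (hΦpos t).le _
      have hYnn : (0:ℝ) ≤ (Φ t) ^ ((2-p)/p) := Real.rpow_nonneg (hΦpos t).le _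
      have hterm1 : (1/p) * (Φ₁ t * ((2-p)/p) * (Φ t) ^ ((2-p)/p - 1)) * Φ₁ t ≤ 0 := by
        have heq : (1/p) * (Φ₁ t * ((2-p)/p) * (Φ t) ^ ((2-p)/p - 1)) * Φ₁ t
            = ((2-p)/p/p) * ((Φ t) ^ ((2-p)/p - 1) * Φ₁ t ^ 2) := by ring
        rw [heq]
        apply mul_nonpos_of_nonpos_of_nonneg
        · apply div_nonpos_of_nonpos_of_nonneg _ hp0.le
          apply div_nonpos_of_nonpos_of_nonneg _ hp0.le
          linarith
        · positivity
      have hterm2 : ((1/p) * (Φ t) ^ ((2-p)/p)) * (∑ s, Dn s t) ≤ (p-1) * cp := by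
        have hkey : (Φ t) ^ ((2-p)/p) * (Φ t) ^ ((p-2)/p) = 1 := by
          rw [← Real.rpow_add (hΦpos t), show ((2-p)/p + (p-2)/p : ℝ) = 0 by ring,
            Real.rpow_zero]
        calc ((1/p) * (Φ t) ^ ((2-p)/p)) * (∑ s, Dn s t)
            ≤ ((1/p) * (Φ t) ^ ((2-p)/p)) * (p * (p-1) * ((Φ t) ^ ((p-2)/p) * cp)) :=
              mul_le_mul_of_nonneg_left (hD_le t) (by positivity)
          _ = (p-1) * cp * ((Φ t) ^ ((2-p)/p) * (Φ t) ^ ((p-2)/p)) * (p * (1/p)) := by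
              ring
          _ = (p-1) * cp := by
              rw [hkey, mul_one_div, div_self (ne_of_gt hp0)]
              ring
      linarith
    -- the comparison functions
    set K : ℝ := (p-1) * cp with hK
    set q1 : ℝ → ℝ := fun t => K * t + h₁ 0 - h₁ t with hq1def
    have hq1d : ∀ t : ℝ, ∃ d2, HasDerivAt q1 (K - d2) t ∧ d2 ≤ K := by
      intro t
      obtain ⟨d2, hd2, hle⟩ := hh1d t
      refine ⟨d2, ?_, hle⟩
      have := (((hasDerivAt_id t).const_mul K).add_const (h₁ 0)).sub hd2
      convert this using 1
      · rfl
      · rfl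
      · rfl
      simp
    have hq1mono : MonotoneOn q1 (Set.Icc (0:ℝ) 1) := by
      refine monotoneOn_of_deriv_nonneg (convex_Icc 0 1) ?_ ?_ ?_
      · intro x _
        obtain ⟨d2, hd2, _⟩ := hq1d x
        exact hd2.continuousAt.continuousWithinAt
      · intro x _
        obtain ⟨d2, hd2, _⟩ := hq1d x
        exact hd2.differentiableAt.differentiableWithinAt
      · intro x _
        obtain ⟨d2, hd2, hle⟩ := hq1d x
        rw [hd2.deriv]
        linarith
    have hq1nn : ∀ x ∈ Set.Icc (0:ℝ) 1, 0 ≤ q1 x := by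
      intro x hx
      have h0 : q1 0 = 0 := by
        rw [hq1def]
        simp
      have := hq1mono (Set.left_mem_Icc.2 zero_le_one) hx hx.1
      rwa [h0] at this
    set q0 : ℝ → ℝ := fun t => K/2 * t^2 + h₁ 0 * t + h 0 - h t with hq0def
    have hq0d : ∀ t : ℝ, HasDerivAt q0 (q1 t) t := by
      intro t
      have hpoly := (((hasDerivAt_pow 2 t).const_mul (K/2)).add
        ((hasDerivAt_id t).const_mul (h₁ 0))).add_const (h 0)
      have := hpoly.sub (hhd t)
      convert this using 1
      · rfl
      · rfl
      · rfl
      rw [hq1def]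
      simp
      ring
    have hq0mono : MonotoneOn q0 (Set.Icc (0:ℝ) 1) := by
      refine monotoneOn_of_deriv_nonneg (convex_Icc 0 1) ?_ ?_ ?_
      · intro x _
        exact (hq0d x).continuousAt.continuousWithinAt
      · intro x _
        exact (hq0d x).differentiableAt.differentiableWithinAt
      · intro x hx
        rw [(hq0d x).deriv]
        rw [interior_Icc] at hx
        exact hq1nn x (Set.mem_Icc_of_Ioo hx)
    have hfinal : q0 0 ≤ q0 1 :=
      hq0mono (Set.left_mem_Icc.2 zero_le_one) (Set.right_mem_Icc.2 zero_le_one) zero_le_one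
    have hq00 : q0 0 = 0 := by rw [hq0def]; simp
    have hq01 : q0 1 = K/2 + h₁ 0 + h 0 - h 1 := by rw [hq0def]; simp
    -- identify everything
    have e1 : (fun t : ℝ => G (U + t • W)) = h := by
      funext t
      rw [hG, hhdef]
      simp only []
      rw [hΦeq t]
    have hfd : fderiv ℝ G U W = h₁ 0 :=
      HasDerivAt.unique (e1 ▸ hGd0) (hhd 0)
    have eG1 : G (U + W) = h 1 := by
      rw [show U + W = U + (1:ℝ) • W by simp]
      exact congrFun e1 1
    have eG0 : G U = h 0 := by
      rw [show G U = G (U + (0:ℝ) • W) by simp]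
      exact congrFun e1 0
    show G (U + W) ≤ G U + (fderiv ℝ G U) W + (p - 1) / 2 * cp
    rw [eG1, eG0, hfd]
    calc h 1 ≤ h 0 + h₁ 0 + K/2 := by
          rw [hq00] at hfinal
          rw [hq01] at hfinal
          linarith
      _ = h 0 + h₁ 0 + (p-1)/2 * cp := by rw [hK]; ring

end Vmain

/-- **Smooth block potential.** For `p ∈ [2,∞)`, the function
`g_p(U) := (1/2)‖U‖_{2,p}²` on the finite product `V = ∏_{s∈S} E(s)` of Euclidean
blocks is convex, Fréchet differentiable, and `(p−1)`-smooth with respect to the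
mixed block norm `‖·‖_{2,p}`. -/
theorem smooth_block_potential {S : Type*} [Fintype S] [Nonempty S]
    {E : S → Type*} [∀ s, NormedAddCommGroup (E s)]
    [∀ s, InnerProductSpace ℝ (E s)] [∀ s, FiniteDimensional ℝ (E s)]
    (p : ℝ) (hp : 2 ≤ p)
    (g : (∀ s, E s) → ℝ)
    (hg : ∀ U : ∀ s, E s, g U = (1 / 2) * ((∑ s, ‖U s‖ ^ p) ^ (1 / p)) ^ 2) :
    ConvexOn ℝ Set.univ g ∧ Differentiable ℝ g ∧
      ∀ U U' : ∀ s, E s,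
        g U' ≤ g U + fderiv ℝ g U (U' - U)
          + ((p - 1) / 2) * ((∑ s, ‖U' s - U s‖ ^ p) ^ (1 / p)) ^ 2 := by
  have hp0 : (0:ℝ) < p := by linarith
  have hgG : g = fun U : ∀ s, E s => (1/2) * ((∑ s, ‖U s‖ ^ p) ^ (2/p)) := by
    funext U
    rw [hg U, aux_sq_rpow hp0 (aux_Phi_nonneg p U)]
  subst hgG
  refine ⟨aux_G_convex p hp, aux_G_diff p hp, fun U U' => ?_⟩
  have hmain := aux_main p hp U (U' - U) (aux_G_diff p hp)
  rw [show U + (U' - U) = U' by abel] at hmain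
  simp only [Pi.sub_apply] at hmain
  rw [aux_sq_rpow hp0 (Finset.sum_nonneg fun s _ => Real.rpow_nonneg (norm_nonneg _) _)]
  exact hmain
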